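/- Given a factorization of a string s into z phrases where each phrase of length > 1 equals some substring of the preceding prefix, the refinement procedure that repeatedly inserts breaks so that every phrase's matching source substring begins at a phrase start and ends at a phrase end produces a factorization with at most z² phrases. -/

import Mathlib

open List

/-- The (non-self-referencing) greedy LZ77 parse of `s`: the phrases are nonempty and
concatenate to `s`; each phrase is a single character or an infix of the already-parsed
prefix, and each phrase is a longest prefix of the unparsed suffix occurring in the
parsed prefix. -/
def IsLZ77Parse {α : Type} (s : List α) (P : List (List α)) : Prop :=
  P.flatten = s ∧ (∀ p ∈ P, p ≠ []) ∧
  ∀ i : Fin P.length,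
    ((P.get i).length = 1 ∨ P.get i <:+: (P.take i.1).flatten) ∧
    ∀ q : List α, q <+: (P.drop i.1).flatten → q <:+: (P.take i.1).flatten →
      q.length ≤ max (P.get i).length 1

/-- The size of a context-free grammar: total number of symbols on right-hand sides. -/
noncomputable def grammarSize {T : Type} (G : ContextFreeGrammar T) : ℕ :=
  ∑ r ∈ G.rules, r.output.length

/-- A grammar is in Chomsky normal form: every rule is `A → a` or `A → B C`. -/
def IsCNF {T : Type} (G : ContextFreeGrammar T) : Prop :=
  ∀ r ∈ G.rules, (∃ a : T, r.output = [Symbol.terminal a]) ∨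
    (∃ B C : G.NT, r.output = [Symbol.nonterminal B, Symbol.nonterminal C])

/-- The set of phrase boundaries of a factorization, measured as the number of
characters to the left of the boundary. -/
def boundaries {α : Type} (P : List (List α)) : Set ℕ :=
  { b | ∃ k ≤ P.length, b = (P.take k).flatten.length }

/-- Phrase `i` of `Q` is the concatenation of the complete consecutive preceding
phrases `j, j+1, …, k-1` of `Q`. -/
def IsConcatOfPrecedingPhrases {α : Type} (Q : List (List α)) (i : Fin Q.length) : Prop :=
  ∃ j k : ℕ, j < k ∧ k ≤ i.1 ∧ Q.get i = ((Q.drop j).take (k - j)).flatten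

namespace LZRefineAux

variable {α : Type}

def slice (s : List α) (a b : ℕ) : List α := (s.drop a).take (b - a)

lemma length_slice (s : List α) (a b : ℕ) :
    (slice s a b).length = min (b - a) (s.length - a) := by
  simp [slice]

lemma slice_zero_left (s : List α) (b : ℕ) : slice s 0 b = s.take b := by
  simp [slice]

lemma slice_append {s : List α} {a b c : ℕ} (h1 : a ≤ b) (h2 : b ≤ c) :
    slice s a b ++ slice s b c = slice s a c := by
  have hc : c - a = (b - a) + (c - b) := by omega
  rw [slice, slice, slice, hc, List.take_add, List.drop_drop]
  have : a + (b - a) = b := by omega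
  rw [this]

lemma slice_slice {s : List α} {a c d e : ℕ} (h1 : d ≤ e) (h2 : a + e ≤ c) :
    slice (slice s a c) d e = slice s (a + d) (a + e) := by
  rw [slice, slice, slice, List.drop_take, List.drop_drop, List.take_take]
  congr 1
  omega


/-! ### Prefix-length function -/

def eP (P : List (List α)) (k : ℕ) : ℕ := ((P.take k).flatten).length

@[simp] lemma eP_zero (P : List (List α)) : eP P 0 = 0 := by simp [eP]

lemma eP_length (P : List (List α)) : eP P P.length = P.flatten.length := by
  simp [eP]

lemma eP_succ {P : List (List α)} {k : ℕ} (hk : k < P.length) :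
    eP P (k + 1) = eP P k + P[k].length := by
  rw [eP, eP, List.take_succ, List.getElem?_eq_getElem hk, List.flatten_append,
    List.length_append]
  simp

lemma eP_mono {P : List (List α)} {k l : ℕ} (h : k ≤ l) : eP P k ≤ eP P l := by
  have : List.take l P = List.take k P ++ List.take (l - k) (List.drop k P) := by
    rw [← List.take_add]
    congr 1
    omega
  rw [eP, eP, this]
  simp

lemma eP_le (P : List (List α)) (k : ℕ) : eP P k ≤ P.flatten.length := by
  rcases le_or_gt k P.length with h | h
  · rw [← eP_length]; exact eP_mono h
  · have h2 : eP P k = eP P P.length := by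
      rw [eP, eP, List.take_of_length_le (le_of_lt h), List.take_length]
    rw [h2, eP_length]

lemma eP_strict {P : List (List α)} (hne : ∀ p ∈ P, p ≠ []) {k : ℕ} (hk : k < P.length) :
    eP P k < eP P (k + 1) := by
  rw [eP_succ hk]
  have : P[k] ≠ [] := hne _ (List.getElem_mem hk)
  have : 0 < P[k].length := List.length_pos_iff.mpr this
  omega

lemma eP_lt_of_lt {P : List (List α)} {k l : ℕ} (h : eP P k < eP P l) : k < l := by
  by_contra hc
  exact absurd (eP_mono (not_lt.mp hc)) (not_le.mpr h)

/-! ### Boundary set of `P` and phrase index -/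

def Bd (P : List (List α)) : Finset ℕ := (Finset.range (P.length + 1)).image (eP P)

lemma mem_Bd_iff {P : List (List α)} {x : ℕ} :
    x ∈ Bd P ↔ ∃ k ≤ P.length, eP P k = x := by
  simp [Bd, Nat.lt_succ_iff]

lemma eP_mem_Bd {P : List (List α)} {k : ℕ} (h : k ≤ P.length) : eP P k ∈ Bd P :=
  mem_Bd_iff.mpr ⟨k, h, rfl⟩

lemma zero_mem_Bd (P : List (List α)) : (0 : ℕ) ∈ Bd P := by
  simpa using eP_mem_Bd (P := P) (Nat.zero_le _)

lemma flen_mem_Bd (P : List (List α)) : P.flatten.length ∈ Bd P := by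
  simpa [eP_length] using eP_mem_Bd (P := P) (le_refl P.length)

def idx (P : List (List α)) (x : ℕ) : ℕ :=
  Nat.findGreatest (fun k => eP P k ≤ x) P.length

lemma eP_idx_le (P : List (List α)) (x : ℕ) : eP P (idx P x) ≤ x :=
  Nat.findGreatest_spec (P := fun k => eP P k ≤ x) (Nat.zero_le _) (by simp)

lemma idx_le (P : List (List α)) (x : ℕ) : idx P x ≤ P.length :=
  Nat.findGreatest_le _

lemma le_idx {P : List (List α)} {k x : ℕ} (hk : k ≤ P.length) (h : eP P k ≤ x) :
    k ≤ idx P x :=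
  Nat.le_findGreatest hk h

lemma idx_lt {P : List (List α)} {x : ℕ} (h : x < P.flatten.length) : idx P x < P.length := by
  rcases lt_or_eq_of_le (idx_le P x) with h' | h'
  · exact h'
  · exfalso
    have := eP_idx_le P x
    rw [h', eP_length] at this
    omega

lemma lt_eP_idx_succ {P : List (List α)} {x : ℕ} (h : x < P.flatten.length) :
    x < eP P (idx P x + 1) := by
  by_contra hc
  exact Nat.findGreatest_is_greatest (Nat.lt_succ_self _) (idx_lt h) (not_lt.mp hc)

lemma eP_idx_of_mem_Bd {P : List (List α)} {x : ℕ} (hx : x ∈ Bd P) :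
    eP P (idx P x) = x := by
  obtain ⟨k, hk, hke⟩ := mem_Bd_iff.mp hx
  have h1 : k ≤ idx P x := le_idx hk (le_of_eq hke)
  have h2 := eP_mono (P := P) h1
  have h3 := eP_idx_le P x
  omega


/-! ### The pull-back map -/

def lenP (P : List (List α)) (i : ℕ) : ℕ := eP P (i + 1) - eP P i

def gmap (P : List (List α)) (u : ℕ → ℕ) (x : ℕ) : ℕ :=
  if x < P.flatten.length ∧ x ∉ Bd P then u (idx P x) + (x - eP P (idx P x)) else x

/-- `u` is a valid source assignment. -/
def GoodU (P : List (List α)) (u : ℕ → ℕ) : Prop :=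
  ∀ i < P.length, 2 ≤ lenP P i →
    u i + lenP P i ≤ eP P i ∧
    slice P.flatten (u i) (u i + lenP P i) = slice P.flatten (eP P i) (eP P (i + 1))

lemma gmap_fix {P : List (List α)} {u : ℕ → ℕ} {x : ℕ}
    (h : x ∈ Bd P ∨ ¬ x < P.flatten.length) : gmap P u x = x := by
  rw [gmap, if_neg]; tauto

lemma interior_facts {P : List (List α)} {u : ℕ → ℕ} (hu : GoodU P u) {x : ℕ}
    (hx : x < P.flatten.length) (hb : x ∉ Bd P) :
    idx P x < P.length ∧ eP P (idx P x) < x ∧ x < eP P (idx P x + 1) ∧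
    2 ≤ lenP P (idx P x) ∧ gmap P u x = u (idx P x) + (x - eP P (idx P x)) ∧
    gmap P u x < eP P (idx P x) := by
  set i := idx P x with hidef
  have h1 : i < P.length := idx_lt hx
  have h2 : eP P i ≤ x := eP_idx_le P x
  have h2' : eP P i ≠ x := fun h => hb (h ▸ eP_mem_Bd (le_of_lt h1))
  have h3 : x < eP P (i + 1) := lt_eP_idx_succ hx
  have h4 : 2 ≤ lenP P i := by unfold lenP; omega
  have h5 : gmap P u x = u i + (x - eP P i) := by rw [gmap, if_pos ⟨hx, hb⟩]
  have h6 := (hu i h1 h4).1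
  unfold lenP at h4 h6
  refine ⟨h1, by omega, h3, by unfold lenP; omega, h5, by omega⟩

lemma gmap_le {P : List (List α)} {u : ℕ → ℕ} (hu : GoodU P u) (x : ℕ) :
    gmap P u x ≤ x := by
  by_cases h1 : x < P.flatten.length ∧ x ∉ Bd P
  · obtain ⟨_, h2, _, _, _, h6⟩ := interior_facts hu h1.1 h1.2
    omega
  · rw [gmap, if_neg h1]

lemma iter_le {P : List (List α)} {u : ℕ → ℕ} (hu : GoodU P u) (m x : ℕ) :
    (gmap P u)^[m] x ≤ x := by
  induction m with
  | zero => simp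
  | succ m ih =>
    rw [Function.iterate_succ_apply']
    exact le_trans (gmap_le hu _) ih

lemma iter_mem_Bd {P : List (List α)} {u : ℕ → ℕ} (hu : GoodU P u) :
    ∀ k x, x ≤ P.flatten.length → (x ∈ Bd P ∨ idx P x < k) →
      (gmap P u)^[k] x ∈ Bd P := by
  intro k
  induction k with
  | zero =>
    intro x hx h
    rcases h with h | h
    · simpa using h
    · omega
  | succ k ih =>
    intro x hx h
    by_cases hb : x ∈ Bd P
    · rw [Function.iterate_succ_apply, gmap_fix (Or.inl hb)]
      exact ih x hx (Or.inl hb)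
    · have hxn : x < P.flatten.length := by
        rcases lt_or_eq_of_le hx with h' | h'
        · exact h'
        · exact absurd (h' ▸ flen_mem_Bd P) hb
      obtain ⟨h1, h2, h3, h4, h5, h6⟩ := interior_facts hu hxn hb
      rw [Function.iterate_succ_apply]
      set y := gmap P u x with hy
      have hyn : y < P.flatten.length := by
        have := eP_idx_le P x
        omega
      apply ih y (le_of_lt hyn)
      by_cases hyb : y ∈ Bd P
      · exact Or.inl hyb
      · right
        have hyi : eP P (idx P y) ≤ y := eP_idx_le P y
        have hlt : idx P y < idx P x := eP_lt_of_lt (P := P) (by omega)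
        rcases h with h | h
        · exact absurd h hb
        · omega

/-! ### The refined boundary set -/

def chainSet (P : List (List α)) (u : ℕ → ℕ) : Finset ℕ :=
  (Finset.range P.length).biUnion fun i =>
    if 2 ≤ lenP P i then
      (Finset.range i).image (fun m => (gmap P u)^[m] (u i)) ∪
      (Finset.range i).image (fun m => (gmap P u)^[m] (u i + lenP P i))
    else ∅

def Bset (P : List (List α)) (u : ℕ → ℕ) : Finset ℕ := Bd P ∪ chainSet P u

lemma Bd_subset_Bset (P : List (List α)) (u : ℕ → ℕ) : Bd P ⊆ Bset P u :=
  Finset.subset_union_left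

lemma chain_mem (P : List (List α)) (u : ℕ → ℕ) {i m : ℕ} (hi : i < P.length)
    (h2 : 2 ≤ lenP P i) (hm : m < i) :
    (gmap P u)^[m] (u i) ∈ chainSet P u ∧
    (gmap P u)^[m] (u i + lenP P i) ∈ chainSet P u := by
  constructor <;>
  · refine Finset.mem_biUnion.mpr ⟨i, Finset.mem_range.mpr hi, ?_⟩
    rw [if_pos h2]
    rw [Finset.mem_union]
    first
      | exact Or.inl (Finset.mem_image.mpr ⟨m, Finset.mem_range.mpr hm, rfl⟩)
      | exact Or.inr (Finset.mem_image.mpr ⟨m, Finset.mem_range.mpr hm, rfl⟩)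

lemma pos_of_len2 {P : List (List α)} {u : ℕ → ℕ} (hu : GoodU P u) {i : ℕ}
    (hi : i < P.length) (h2 : 2 ≤ lenP P i) : 0 < i := by
  have h3 := (hu i hi h2).1
  have h4 : eP P 0 < eP P i := by
    rw [eP_zero]
    omega
  exact eP_lt_of_lt h4

lemma mem_Bset_le {P : List (List α)} {u : ℕ → ℕ} (hu : GoodU P u) {x : ℕ}
    (hx : x ∈ Bset P u) : x ≤ P.flatten.length := by
  rcases Finset.mem_union.mp hx with h | h
  · obtain ⟨k, _, he⟩ := mem_Bd_iff.mp h
    exact he ▸ eP_le P k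
  · obtain ⟨i, hi, hmem⟩ := Finset.mem_biUnion.mp h
    rw [Finset.mem_range] at hi
    by_cases h2 : 2 ≤ lenP P i
    · rw [if_pos h2] at hmem
      have hui := (hu i hi h2).1
      have hei := eP_le P i
      rcases Finset.mem_union.mp hmem with hm | hm
      · obtain ⟨m, _, rfl⟩ := Finset.mem_image.mp hm
        have := iter_le hu m (u i)
        omega
      · obtain ⟨m, _, rfl⟩ := Finset.mem_image.mp hm
        have := iter_le hu m (u i + lenP P i)
        omega
    · rw [if_neg h2] at hmem
      simp at hmem

lemma chain_step {P : List (List α)} {u : ℕ → ℕ} (hu : GoodU P u) {i w x : ℕ}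
    (hi : i < P.length) (h2 : 2 ≤ lenP P i) (hw : w ≤ eP P i) {m : ℕ} (hm : m < i)
    (hgw : (gmap P u)^[m] w = x)
    (hmem1 : ∀ m' < i, (gmap P u)^[m'] w ∈ chainSet P u) :
    gmap P u x ∈ Bset P u := by
  have hx1 : gmap P u x = (gmap P u)^[m + 1] w := by
    rw [Function.iterate_succ_apply', hgw]
  rcases lt_or_eq_of_le (Nat.succ_le_of_lt hm) with hlt | heq
  · exact hx1 ▸ Finset.mem_union_right _ (hmem1 _ hlt)
  · have hwn : w ≤ P.flatten.length := le_trans hw (eP_le P i)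
    have hbd : (gmap P u)^[i] w ∈ Bd P := by
      apply iter_mem_Bd hu i w hwn
      by_cases hwb : w ∈ Bd P
      · exact Or.inl hwb
      · right
        have hwlt : w < eP P i := by
          rcases lt_or_eq_of_le hw with h' | h'
          · exact h'
          · exact absurd (h' ▸ eP_mem_Bd (le_of_lt hi)) hwb
        have := eP_idx_le P w
        exact eP_lt_of_lt (P := P) (by omega)
    have heq' : m + 1 = i := heq
    rw [hx1, heq']
    exact Finset.mem_union_left _ hbd

lemma gmap_mem_Bset {P : List (List α)} {u : ℕ → ℕ} (hu : GoodU P u) {x : ℕ}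
    (hx : x ∈ Bset P u) (hb : x ∉ Bd P) (hn : x < P.flatten.length) :
    gmap P u x ∈ Bset P u := by
  rcases Finset.mem_union.mp hx with h | h
  · exact absurd h hb
  · obtain ⟨i, hi, hmem⟩ := Finset.mem_biUnion.mp h
    rw [Finset.mem_range] at hi
    by_cases h2 : 2 ≤ lenP P i
    swap
    · rw [if_neg h2] at hmem; simp at hmem
    rw [if_pos h2] at hmem
    have hui := (hu i hi h2).1
    rcases Finset.mem_union.mp hmem with hm | hm <;>
      obtain ⟨m, hmr, hgw⟩ := Finset.mem_image.mp hm <;>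
      rw [Finset.mem_range] at hmr
    · exact chain_step hu hi h2 (by omega) hmr hgw
        (fun m' hm' => (chain_mem P u hi h2 hm').1)
    · exact chain_step hu hi h2 (by omega) hmr hgw
        (fun m' hm' => (chain_mem P u hi h2 hm').2)

lemma card_Bset (P : List (List α)) (u : ℕ → ℕ) :
    (Bset P u).card ≤ P.length ^ 2 + 1 := by
  have h1 : (Bd P).card ≤ P.length + 1 :=
    le_trans Finset.card_image_le (by simp)
  have h2 : (chainSet P u).card ≤ ∑ i ∈ Finset.range P.length, 2 * i := by
    refine le_trans Finset.card_biUnion_le (Finset.sum_le_sum ?_)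
    intro i _
    split_ifs
    · refine le_trans (Finset.card_union_le _ _) ?_
      have ha := Finset.card_image_le (s := Finset.range i)
        (f := fun m => (gmap P u)^[m] (u i))
      have hb := Finset.card_image_le (s := Finset.range i)
        (f := fun m => (gmap P u)^[m] (u i + lenP P i))
      simp only [Finset.card_range] at ha hb
      omega
    · simp
  have h3 : (∑ i ∈ Finset.range P.length, 2 * i) = P.length * (P.length - 1) := by
    rw [← Finset.sum_range_id_mul_two P.length, Finset.sum_mul]
    exact Finset.sum_congr rfl fun _ _ => Nat.mul_comm _ _
  have h4 := Finset.card_union_le (Bd P) (chainSet P u)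
  have h5 : P.length + 1 + P.length * (P.length - 1) ≤ P.length ^ 2 + 1 := by
    rcases Nat.eq_zero_or_pos P.length with hz | hz
    · simp [hz]
    · have : P.length * (P.length - 1) = P.length ^ 2 - P.length := by
        rw [pow_two, Nat.mul_sub_one]
      have hsq : P.length ≤ P.length ^ 2 := by
        nlinarith
      omega
  calc (Bset P u).card ≤ (Bd P).card + (chainSet P u).card := h4
    _ ≤ P.length + 1 + (∑ i ∈ Finset.range P.length, 2 * i) := by omega
    _ ≤ P.length ^ 2 + 1 := by omega


/-! ### Chunks of a string determined by a list of cut positions -/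

def chunks (s : List α) (L : List ℕ) : List (List α) := L.zipWith (slice s) L.tail

lemma length_chunks (s : List α) (L : List ℕ) :
    (chunks s L).length = L.length - 1 := by
  simp [chunks]

lemma getElem_chunks (s : List α) (L : List ℕ) {j : ℕ} (hj : j + 1 < L.length) :
    (chunks s L)[j]'(by rw [length_chunks]; omega) =
      slice s (L[j]'(by omega)) (L[j + 1]'hj) := by
  simp only [chunks, List.getElem_zipWith, List.getElem_tail]

end LZRefineAux

namespace LZRefineAux

theorem main' {α : Type} (s : List α)
    (P : List (List α)) (hPs : P.flatten = s) (hne : ∀ p ∈ P, p ≠ [])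
    (hsrc : ∀ i : Fin P.length, 1 < (P.get i).length → P.get i <:+: (P.take i.1).flatten) :
    ∃ Q : List (List α), Q.flatten = s ∧ (∀ p ∈ Q, p ≠ []) ∧
      boundaries P ⊆ boundaries Q ∧
      (∀ i : Fin Q.length, (Q.get i).length = 1 ∨ IsConcatOfPrecedingPhrases Q i) ∧
      Q.length ≤ P.length ^ 2 := by
  classical
  subst hPs
  -- choose the source positions
  have hex : ∀ i : ℕ, ∃ ui : ℕ, i < P.length → 2 ≤ lenP P i →
      ui + lenP P i ≤ eP P i ∧
      slice P.flatten ui (ui + lenP P i) =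
        slice P.flatten (eP P i) (eP P (i + 1)) := by
    intro i
    by_cases hic : i < P.length ∧ 2 ≤ lenP P i
    · obtain ⟨hi, h2⟩ := hic
      have hlen : lenP P i = P[i].length := by
        unfold lenP; rw [eP_succ hi]; omega
      have h1 : 1 < (P.get ⟨i, hi⟩).length := by
        show 1 < P[i].length; omega
      obtain ⟨t, r, htr0⟩ := hsrc ⟨i, hi⟩ h1
      have htr : t ++ P[i] ++ r = (P.take i).flatten := htr0
      refine ⟨t.length, fun _ _ => ⟨?_, ?_⟩⟩
      · have hc := congrArg List.length htr
        simp only [List.length_append] at hc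
        have he : eP P i = (P.take i).flatten.length := rfl
        omega
      · have hA : slice P.flatten t.length (t.length + lenP P i) = P[i] := by
          have hsplit : P.flatten = t ++ (P[i] ++ (r ++ (P.drop i).flatten)) := by
            conv_lhs => rw [← List.take_append_drop i P, List.flatten_append, ← htr]
            simp [List.append_assoc]
          rw [slice, hsplit, List.drop_left]
          have hd : t.length + lenP P i - t.length = P[i].length := by omega
          rw [hd, List.take_left' rfl]
        have hB : slice P.flatten (eP P i) (eP P (i + 1)) = P[i] := by
          have hsplit : P.flatten = (P.take i).flatten ++ (P[i] ++ (P.drop (i + 1)).flatten) := by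
            have hdrop : (P.drop i).flatten = P[i] ++ (P.drop (i + 1)).flatten := by
              rw [List.drop_eq_getElem_cons hi, List.flatten_cons]
            conv_lhs => rw [← List.take_append_drop i P, List.flatten_append, hdrop]
          have hd1 : (P.take i).flatten.length = eP P i := rfl
          rw [slice, hsplit, List.drop_left' hd1]
          have hd : eP P (i + 1) - eP P i = P[i].length := by rw [eP_succ hi]; omega
          rw [hd, List.take_left' rfl]
        rw [hA, hB]
    · exact ⟨0, fun ha hb => absurd ⟨ha, hb⟩ hic⟩
  choose u hu using hex
  have hU : GoodU P u := fun i hi h2 => hu i hi h2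
  set n := P.flatten.length with hn
  set L := (Bset P u).sort (· ≤ ·) with hLdef
  have hsort : L.Pairwise (· < ·) := (Finset.sortedLT_sort _).pairwise
  have hmemL : ∀ x : ℕ, x ∈ L ↔ x ∈ Bset P u := fun x => Finset.mem_sort _
  have hmono : ∀ {i j : ℕ}, (hi : i < L.length) → (hj : j < L.length) → i < j →
      L[i] < L[j] := fun hi hj hij => List.pairwise_iff_getElem.mp hsort _ _ hi hj hij
  have hreflect : ∀ {i j : ℕ}, (hi : i < L.length) → (hj : j < L.length) →
      L[i] < L[j] → i < j := by
    intro i j hi hj hlt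
    by_contra hc
    push_neg at hc
    rcases eq_or_lt_of_le hc with h | h
    · subst h; omega
    · exact absurd (hmono hj hi h) (by omega)
  have hreflect' : ∀ {i j : ℕ}, (hi : i < L.length) → (hj : j < L.length) →
      L[i] ≤ L[j] → i ≤ j := by
    intro i j hi hj hle
    by_contra hc
    push_neg at hc
    exact absurd (hmono hj hi hc) (by omega)
  have hmemle : ∀ x ∈ L, x ≤ n := fun x hx => mem_Bset_le hU ((hmemL x).mp hx)
  have h0mem : (0 : ℕ) ∈ L := (hmemL 0).mpr (Bd_subset_Bset P u (zero_mem_Bd P))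
  have hnmem : n ∈ L := (hmemL n).mpr (Bd_subset_Bset P u (flen_mem_Bd P))
  have hlen1 : 1 ≤ L.length := by
    rcases List.mem_iff_getElem.mp h0mem with ⟨j, hj, _⟩
    omega
  have hL0 : ∀ (h : 0 < L.length), L[0] = 0 := by
    intro h
    obtain ⟨j0, hj0, hj0e⟩ := List.mem_iff_getElem.mp h0mem
    rcases Nat.eq_zero_or_pos j0 with h' | h'
    · subst h'; exact hj0e
    · have := hmono h hj0 h'
      omega
  have hLlast : ∀ (h : L.length - 1 < L.length), L[L.length - 1] = n := by
    intro h
    obtain ⟨j1, hj1, hj1e⟩ := List.mem_iff_getElem.mp hnmem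
    rcases eq_or_lt_of_le (Nat.le_sub_one_of_lt hj1) with h' | h'
    · subst h'; exact hj1e
    · have h2 := hmono hj1 h h'
      have h3 := hmemle _ (List.getElem_mem h)
      omega
  set Q := chunks P.flatten L with hQdef
  have hQlen : Q.length = L.length - 1 := length_chunks _ _
  have hQget : ∀ (j : ℕ) (hj : j + 1 < L.length),
      Q[j]'(by rw [hQlen]; omega) = slice P.flatten (L[j]'(by omega)) (L[j + 1]'hj) :=
    fun j hj => getElem_chunks _ _ hj
  have htake : ∀ k, (hk : k < L.length) → ((Q.take k).flatten) = P.flatten.take (L[k]) := by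
    intro k
    induction k with
    | zero =>
      intro hk
      rw [hL0 hk]
      simp
    | succ k ih =>
      intro hk
      have hk' : k < L.length := by omega
      have hkQ : k < Q.length := by rw [hQlen]; omega
      rw [List.take_succ, List.getElem?_eq_getElem hkQ]
      simp only [Option.toList_some, List.flatten_append, List.flatten_cons,
        List.flatten_nil, List.append_nil]
      rw [ih hk', hQget k hk]
      rw [← slice_zero_left, ← slice_zero_left,
        slice_append (Nat.zero_le _) (le_of_lt (hmono hk' hk (by omega)))]
  have hflat : Q.flatten = P.flatten := by
    have h1 : Q.flatten = (Q.take Q.length).flatten := by rw [List.take_length]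
    have h2 : L.length - 1 < L.length := by omega
    rw [h1, hQlen, htake _ h2, hLlast h2]
    exact List.take_length
  have hseg : ∀ j k, (hjk : j ≤ k) → (hk : k < L.length) →
      ((Q.drop j).take (k - j)).flatten = slice P.flatten (L[j]'(by omega)) (L[k]'hk) := by
    intro j k hjk hk
    have hj : j < L.length := by omega
    have e1 : Q.take k = Q.take j ++ (Q.drop j).take (k - j) := by
      rw [← List.take_add]
      congr 1
      omega
    have e2 := htake k hk
    rw [e1, List.flatten_append, htake j hj] at e2
    have hLjk : L[j] ≤ L[k] := by
      rcases eq_or_lt_of_le hjk with h | h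
      · subst h; rfl
      · exact le_of_lt (hmono hj hk h)
    have e4 : P.flatten.take (L[k]'hk) =
        P.flatten.take (L[j]'hj) ++ slice P.flatten (L[j]'hj) (L[k]'hk) := by
      rw [← slice_zero_left, ← slice_zero_left, slice_append (Nat.zero_le _) hLjk]
    rw [e4] at e2
    exact List.append_cancel_left e2
  refine ⟨Q, hflat, ?_, ?_, ?_, ?_⟩
  · -- nonempty
    intro p hp
    obtain ⟨j, hj, rfl⟩ := List.mem_iff_getElem.mp hp
    have hj1 : j + 1 < L.length := by rw [hQlen] at hj; omega
    rw [hQget j hj1]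
    have h1 : L[j] < L[j + 1] := hmono (by omega) hj1 (by omega)
    have h2 : L[j + 1] ≤ n := hmemle _ (List.getElem_mem hj1)
    have h3 : 0 < (slice P.flatten (L[j]'(by omega)) (L[j + 1]'hj1)).length := by
      rw [length_slice]; omega
    exact List.length_pos_iff.mp h3
  · -- boundaries
    rintro b ⟨k, hk, rfl⟩
    have hbB : eP P k ∈ L := (hmemL _).mpr (Bd_subset_Bset P u (eP_mem_Bd hk))
    obtain ⟨j, hj, hje⟩ := List.mem_iff_getElem.mp hbB
    refine ⟨j, by omega, ?_⟩
    have h1 : (Q.take j).flatten.length = min (L[j]'hj) P.flatten.length := by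
      rw [htake j hj, List.length_take]
    have h2 := eP_le P k
    have h3 : (P.take k).flatten.length = eP P k := rfl
    omega
  · -- main property
    intro i
    have hiQ : i.1 < Q.length := i.2
    have hj1 : i.1 + 1 < L.length := by omega
    have hj0 : i.1 < L.length := by omega
    have hab : L[i.1] < L[i.1 + 1] := hmono hj0 hj1 (by omega)
    have hbn : L[i.1 + 1] ≤ n := hmemle _ (List.getElem_mem hj1)
    have hget : Q.get i = slice P.flatten (L[i.1]'hj0) (L[i.1 + 1]'hj1) := by
      rw [List.get_eq_getElem]
      exact hQget i.1 hj1
    by_cases hone : L[i.1 + 1] - L[i.1] = 1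
    · left
      rw [hget, length_slice]
      omega
    · right
      have han : L[i.1] < n := by omega
      set i0 := idx P (L[i.1]'hj0) with hi0def
      have hi0lt : i0 < P.length := idx_lt (by omega)
      have hei0le : eP P i0 ≤ L[i.1] := eP_idx_le P _
      have hlt1 : L[i.1] < eP P (i0 + 1) := lt_eP_idx_succ (by omega)
      have hble : L[i.1 + 1] ≤ eP P (i0 + 1) := by
        by_contra hc
        push_neg at hc
        have hmemE : eP P (i0 + 1) ∈ L :=
          (hmemL _).mpr (Bd_subset_Bset P u (eP_mem_Bd (by omega)))
        obtain ⟨j', hj', hj'e⟩ := List.mem_iff_getElem.mp hmemE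
        have c1 : i.1 < j' := hreflect hj0 hj' (by omega)
        have c2 : j' < i.1 + 1 := hreflect hj' hj1 (by omega)
        omega
      have hlenPe : lenP P i0 = eP P (i0 + 1) - eP P i0 := rfl
      have h2len : 2 ≤ lenP P i0 := by omega
      obtain ⟨hv, hslice⟩ := hU i0 hi0lt h2len
      have hi0pos : 0 < i0 := pos_of_len2 hU hi0lt h2len
      set a' := u i0 + (L[i.1] - eP P i0) with ha'def
      set b' := u i0 + (L[i.1 + 1] - eP P i0) with hb'def
      have hsliceEq : slice P.flatten (L[i.1]'hj0) (L[i.1 + 1]'hj1) =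
          slice P.flatten a' b' := by
        have e1 : slice P.flatten (L[i.1]'hj0) (L[i.1 + 1]'hj1) =
            slice (slice P.flatten (eP P i0) (eP P (i0 + 1)))
              (L[i.1] - eP P i0) (L[i.1 + 1] - eP P i0) := by
          rw [slice_slice (by omega) (by omega)]
          congr 1 <;> omega
        rw [e1, ← hslice, slice_slice (by omega) (by omega)]
      have ha'B : a' ∈ Bset P u := by
        rcases eq_or_lt_of_le hei0le with hcase | hcase
        · have hval : a' = u i0 := by rw [ha'def]; omega
          rw [hval]
          have hc := (chain_mem (P := P) (u := u) hi0lt h2len hi0pos).1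
          simp only [Function.iterate_zero, id_eq] at hc
          exact Finset.mem_union_right _ hc
        · have hanb : L[i.1] ∉ Bd P := by
            intro hmem
            have hh := eP_idx_of_mem_Bd hmem
            rw [← hi0def] at hh
            omega
          have haB : L[i.1] ∈ Bset P u := (hmemL _).mp (List.getElem_mem hj0)
          have hg := gmap_mem_Bset hU haB hanb (by omega)
          have hgval : gmap P u (L[i.1]'hj0) = a' := by
            rw [gmap, if_pos (⟨by omega, hanb⟩ :
              L[i.1] < P.flatten.length ∧ L[i.1] ∉ Bd P), ← hi0def]
          rw [← hgval]
          exact hg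
      have hb'B : b' ∈ Bset P u := by
        rcases eq_or_lt_of_le hble with hcase | hcase
        · have hval : b' = u i0 + lenP P i0 := by rw [hb'def]; omega
          rw [hval]
          have hc := (chain_mem (P := P) (u := u) hi0lt h2len hi0pos).2
          simp only [Function.iterate_zero, id_eq] at hc
          exact Finset.mem_union_right _ hc
        · have hbnb : L[i.1 + 1] ∉ Bd P := by
            intro hmem
            obtain ⟨k, hk, hke⟩ := mem_Bd_iff.mp hmem
            have hik : i0 < k := eP_lt_of_lt (P := P) (by omega)
            have hmm : eP P (i0 + 1) ≤ eP P k := eP_mono (by omega)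
            omega
          have hidxb : idx P (L[i.1 + 1]'hj1) = i0 := by
            have hle1 : i0 ≤ idx P (L[i.1 + 1]'hj1) :=
              le_idx (le_of_lt hi0lt) (le_trans hei0le (le_of_lt hab))
            have hle2 := eP_idx_le P (L[i.1 + 1]'hj1)
            by_contra hc2
            have hstep : i0 + 1 ≤ idx P (L[i.1 + 1]'hj1) := by omega
            have := eP_mono (P := P) hstep
            omega
          have hbB : L[i.1 + 1] ∈ Bset P u := (hmemL _).mp (List.getElem_mem hj1)
          have hEn : eP P (i0 + 1) ≤ P.flatten.length := eP_le P (i0 + 1)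
          have hg := gmap_mem_Bset hU hbB hbnb (by omega)
          have hgval : gmap P u (L[i.1 + 1]'hj1) = b' := by
            rw [gmap, if_pos (⟨by omega, hbnb⟩ :
              L[i.1 + 1] < P.flatten.length ∧ L[i.1 + 1] ∉ Bd P), hidxb]
          rw [← hgval]
          exact hg
      obtain ⟨j1, hj1L, hj1e⟩ := List.mem_iff_getElem.mp ((hmemL a').mpr ha'B)
      obtain ⟨k1, hk1L, hk1e⟩ := List.mem_iff_getElem.mp ((hmemL b').mpr hb'B)
      have hj1k1 : j1 < k1 := hreflect hj1L hk1L (by omega)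
      refine ⟨j1, k1, hj1k1, hreflect' hk1L hj0 (by omega), ?_⟩
      rw [hget, hsliceEq, ← hj1e, ← hk1e, hseg j1 k1 (le_of_lt hj1k1) hk1L]
  · -- length bound
    have hcard := card_Bset P u
    have hLc : L.length = (Bset P u).card := Finset.length_sort _
    omega

end LZRefineAux


/-- Refining an LZ77-style factorization (each phrase of length `> 1` occurs in the
preceding prefix) so that every phrase's source begins and ends at phrase boundaries
yields a factorization with at most `z²` phrases, each of which is a single character
or a concatenation of complete consecutive preceding phrases. -/
theorem lz77_refinement_at_most_z_squared {α : Type} (s : List α)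
    (P : List (List α)) (hPs : P.flatten = s) (hne : ∀ p ∈ P, p ≠ [])
    (hsrc : ∀ i : Fin P.length, 1 < (P.get i).length → P.get i <:+: (P.take i.1).flatten) :
    ∃ Q : List (List α), Q.flatten = s ∧ (∀ p ∈ Q, p ≠ []) ∧
      boundaries P ⊆ boundaries Q ∧
      (∀ i : Fin Q.length, (Q.get i).length = 1 ∨ IsConcatOfPrecedingPhrases Q i) ∧
      Q.length ≤ P.length ^ 2 :=
  LZRefineAux.main' s P hPs hne hsrc
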